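/- In the state machine for (FIFO) work-stealing with weak multiplicity, starting from the all-empty state, after any finite sequence of transitions, each component t_i of the state is a suffix of the string of all tasks inserted so far (in insertion order). -/

import Mathlib

/-- Labels for the (FIFO) work-stealing with weak multiplicity state machine:
a `Put` of task `x`, an extraction (Take if `i = 0`, Steal otherwise) by
process `i` returning task `x`, or an extraction on an empty component
returning `empty`. -/
inductive WLab (n : ℕ) where
  | put (x : ℕ) : WLab n
  | extract (i : Fin n) (x : ℕ) : WLab n
  | extractEmpty (i : Fin n) : WLab n

/-- Transition relation of the weak-multiplicity state machine.  States are
`n`-vectors of finite strings over ℕ (head of each string at the front).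
`put x` appends `x` to every component.  An extraction by process `i` on
`t_i = x_1 ⋯ x_j · q`, where `x_j · q` is the shortest component (encoded by
`hshort`: some component `p` satisfies `k + |t_p| ≤ |t_i| + 1`, equivalently
`k ≤ j` for `j` determined by the minimum length), returns `x_k` for some
`1 ≤ k ≤ j` and replaces `t_i` by `x_{k+1} ⋯ x_j · q`. -/
inductive WStep {n : ℕ} : (Fin n → List ℕ) → WLab n → (Fin n → List ℕ) → Prop
  | put (s : Fin n → List ℕ) (x : ℕ) :
      WStep s (.put x) (fun i => s i ++ [x])
  | extract (s : Fin n → List ℕ) (i : Fin n) (k x : ℕ)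
      (hk1 : 1 ≤ k) (hk2 : k ≤ (s i).length)
      (hshort : ∃ p, k + (s p).length ≤ (s i).length + 1)
      (hx : (s i)[k - 1]? = some x) :
      WStep s (.extract i x) (Function.update s i ((s i).drop k))
  | extractEmpty (s : Fin n → List ℕ) (i : Fin n) (h : s i = []) :
      WStep s (.extractEmpty i) s

/-- Finite executions of the weak-multiplicity machine from the all-empty
initial state, recording the trace of transitions and the resulting state. -/
inductive WExec {n : ℕ} : List (WLab n) → (Fin n → List ℕ) → Prop
  | nil : WExec [] (fun _ => [])
  | snoc {tr : List (WLab n)} {s : Fin n → List ℕ} {l : WLab n} {s' : Fin n → List ℕ} :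
      WExec tr s → WStep s l s' → WExec (tr ++ [l]) s'

/-- The string of tasks inserted so far: the arguments of `put` transitions,
in order. -/
def winserted {n : ℕ} (tr : List (WLab n)) : List ℕ :=
  tr.filterMap fun l => match l with | .put x => some x | _ => none

/-- starting from the all-empty state, after any finite sequence
of transitions each component of the state is a suffix of the string of all
tasks inserted so far (in insertion order). -/
theorem weak_mult_component_suffix_of_inserted {n : ℕ}
    (tr : List (WLab n)) (s : Fin n → List ℕ) (h : WExec tr s) :
    ∀ i : Fin n, s i <:+ winserted tr := by
  induction h with
  | nil => intro i; simp
  | @snoc tr s l s' _ hstep ih =>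
    intro i
    have hw : winserted (tr ++ [l]) =
        winserted tr ++ winserted [l] := by
      simp [winserted, List.filterMap_append]
    rw [hw]
    cases hstep with
    | put x =>
        obtain ⟨t, ht⟩ := ih i
        exact ⟨t, by rw [← List.append_assoc, ht]; simp [winserted]⟩
    | extract j k x hk1 hk2 hshort hx =>
        have h2 : Function.update s j ((s j).drop k) i <:+ s i := by
          by_cases hij : i = j
          · subst hij; simp only [Function.update_self]; exact List.drop_suffix _ _
          · simp [Function.update_of_ne hij]
        simpa [winserted] using h2.trans (ih i)
    | extractEmpty j hempty =>
        simpa [winserted] using ih i
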